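/- Let Q n denote the number of partial matchings on n points with no arc between adjacent points (crossings allowed) that are invariant under the reflection i ↦ n+1-i. Then for all n ≥ 1: Q (2n+1) = Q (2n) + Q (2n-1). -/
import Mathlib


/-- A partial matching on `n` linearly ordered points (0-indexed), given as a finite
set of arcs `(i,j)` with `i + 2 ≤ j` (so no arc connects two adjacent points),
with all arc endpoints pairwise distinct. -/
def IsMatching (n : ℕ) (M : Finset (Fin n × Fin n)) : Prop :=
  (∀ p ∈ M, p.1.val + 2 ≤ p.2.val) ∧
  ∀ p ∈ M, ∀ q ∈ M, p ≠ q →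
    p.1 ≠ q.1 ∧ p.1 ≠ q.2 ∧ p.2 ≠ q.1 ∧ p.2 ≠ q.2

/-- No two arcs cross. -/
def Noncrossing (n : ℕ) (M : Finset (Fin n × Fin n)) : Prop :=
  ∀ p ∈ M, ∀ q ∈ M, ¬(p.1 < q.1 ∧ q.1 < p.2 ∧ p.2 < q.2)

/-- The matching is invariant under the reflection `i ↦ n+1-i` (here `Fin.rev`). -/
def SymmMatching (n : ℕ) (M : Finset (Fin n × Fin n)) : Prop :=
  ∀ p ∈ M, (p.2.rev, p.1.rev) ∈ M

/-- The number of symmetric partial matchings (crossings allowed) on `n` points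
with no arc between adjacent points. -/
noncomputable def Q (n : ℕ) : ℕ :=
  Nat.card {M : Finset (Fin n × Fin n) // IsMatching n M ∧ SymmMatching n M}

theorem center_free {N k : ℕ} (hN : N = 2 * k + 1)
    {M : Finset (Fin N × Fin N)} (hM : IsMatching N M) (hS : SymmMatching N M) :
    ∀ p ∈ M, p.1.val ≠ k ∧ p.2.val ≠ k := by
  intro p hp
  have hgap := hM.1 p hp
  have hq := hS p hp
  have h1lt := p.1.2
  have h2lt := p.2.2
  constructor
  · intro h1
    have hrev1 : p.1.rev = p.1 := by
      apply Fin.ext; rw [Fin.val_rev]; omega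
    have hne : p ≠ (p.2.rev, p.1.rev) := by
      intro he
      have h := congrArg Fin.val (congrArg Prod.fst he)
      simp only [Fin.val_rev] at h
      omega
    have := (hM.2 p hp _ hq hne).2.1
    rw [hrev1] at this; exact this rfl
  · intro h2
    have hrev2 : p.2.rev = p.2 := by
      apply Fin.ext; rw [Fin.val_rev]; omega
    have hne : p ≠ (p.2.rev, p.1.rev) := by
      intro he
      have h := congrArg Fin.val (congrArg Prod.snd he)
      simp only [Fin.val_rev] at h
      omega
    have := (hM.2 p hp _ hq hne).2.2.1
    rw [hrev2] at this; exact this rfl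

/-! ### A side: deleting the center of `Fin (2*m+3)` -/

def cArc (m : ℕ) : Fin (2*m+3) × Fin (2*m+3) := (⟨m, by omega⟩, ⟨m+2, by omega⟩)

def dA (m : ℕ) (i : Fin (2*m+3)) : Fin (2*m+2) :=
  if h : i.val ≤ m then ⟨i.val, by omega⟩ else ⟨i.val - 1, by have := i.2; omega⟩

def uA (m : ℕ) (i : Fin (2*m+2)) : Fin (2*m+3) :=
  if h : i.val ≤ m then ⟨i.val, by omega⟩ else ⟨i.val + 1, by have := i.2; omega⟩

lemma dA_val (m : ℕ) (i : Fin (2*m+3)) :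
    (dA m i).val = if i.val ≤ m then i.val else i.val - 1 := by
  unfold dA; split_ifs <;> rfl

lemma uA_val (m : ℕ) (i : Fin (2*m+2)) :
    (uA m i).val = if i.val ≤ m then i.val else i.val + 1 := by
  unfold uA; split_ifs <;> rfl

lemma uA_ne (m : ℕ) (i : Fin (2*m+2)) : (uA m i).val ≠ m + 1 := by
  have := i.2; rw [uA_val]; split_ifs <;> omega

lemma dA_uA (m : ℕ) (i : Fin (2*m+2)) : dA m (uA m i) = i := by
  have := i.2; apply Fin.ext; simp only [dA_val, uA_val]; split_ifs <;> omega

lemma uA_dA (m : ℕ) (i : Fin (2*m+3)) (h : i.val ≠ m + 1) : uA m (dA m i) = i := by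
  have := i.2; apply Fin.ext; simp only [uA_val, dA_val]; split_ifs <;> omega

lemma uA_inj (m : ℕ) {i j : Fin (2*m+2)} (h : uA m i = uA m j) : i = j := by
  rw [← dA_uA m i, ← dA_uA m j, h]

lemma dA_inj (m : ℕ) {i j : Fin (2*m+3)} (hi : i.val ≠ m+1) (hj : j.val ≠ m+1)
    (h : dA m i = dA m j) : i = j := by
  rw [← uA_dA m i hi, ← uA_dA m j hj, h]

lemma uA_rev (m : ℕ) (i : Fin (2*m+2)) : (uA m i).rev = uA m i.rev := by
  have := i.2
  apply Fin.ext
  simp only [Fin.val_rev, uA_val]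
  split_ifs <;> omega

lemma dA_rev (m : ℕ) (i : Fin (2*m+3)) (h : i.val ≠ m+1) : (dA m i).rev = dA m i.rev := by
  have := i.2
  apply Fin.ext
  simp only [Fin.val_rev, dA_val]
  split_ifs <;> omega

def FA (m : ℕ) (M : Finset (Fin (2*m+3) × Fin (2*m+3))) : Finset (Fin (2*m+2) × Fin (2*m+2)) :=
  M.image (fun p => (dA m p.1, dA m p.2))

def GA (m : ℕ) (M : Finset (Fin (2*m+2) × Fin (2*m+2))) : Finset (Fin (2*m+3) × Fin (2*m+3)) :=
  M.image (fun p => (uA m p.1, uA m p.2))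

lemma mem_FA {m : ℕ} {M : Finset (Fin (2*m+3) × Fin (2*m+3))}
    (hc : ∀ p ∈ M, p.1.val ≠ m+1 ∧ p.2.val ≠ m+1) (q : Fin (2*m+2) × Fin (2*m+2)) :
    q ∈ FA m M ↔ (uA m q.1, uA m q.2) ∈ M := by
  simp only [FA, Finset.mem_image]
  constructor
  · rintro ⟨p, hp, rfl⟩
    have h := hc p hp
    rw [uA_dA m _ h.1, uA_dA m _ h.2]
    simpa using hp
  · intro h
    exact ⟨_, h, by rw [dA_uA, dA_uA]⟩

lemma mem_GA {m : ℕ} {M : Finset (Fin (2*m+2) × Fin (2*m+2))} (q : Fin (2*m+3) × Fin (2*m+3)) :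
    q ∈ GA m M ↔ q.1.val ≠ m+1 ∧ q.2.val ≠ m+1 ∧ (dA m q.1, dA m q.2) ∈ M := by
  simp only [GA, Finset.mem_image]
  constructor
  · rintro ⟨p, hp, rfl⟩
    refine ⟨uA_ne m _, uA_ne m _, ?_⟩
    rw [dA_uA, dA_uA]; simpa using hp
  · rintro ⟨h1, h2, h3⟩
    exact ⟨_, h3, by rw [uA_dA m _ h1, uA_dA m _ h2]⟩

lemma FA_isMatching {m : ℕ} {M : Finset (Fin (2*m+3) × Fin (2*m+3))}
    (hM : IsMatching (2*m+3) M) (hS : SymmMatching (2*m+3) M) (hcM : cArc m ∉ M) :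
    IsMatching (2*m+2) (FA m M) := by
  have hfree : ∀ p ∈ M, p.1.val ≠ m+1 ∧ p.2.val ≠ m+1 :=
    center_free (by ring) hM hS
  constructor
  · intro p' hp'
    simp only [FA, Finset.mem_image] at hp'
    obtain ⟨p, hp, rfl⟩ := hp'
    have hgap := hM.1 p hp
    have hf := hfree p hp
    have hvc : p.1.val ≠ m ∨ p.2.val ≠ m+2 := by
      by_contra hcon
      push_neg at hcon
      exact hcM (by
        have : p = cArc m := Prod.ext (Fin.ext hcon.1) (Fin.ext hcon.2)
        rwa [this] at hp)
    simp only [dA_val]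
    rcases hvc with h | h <;> (split_ifs <;> omega)
  · intro p' hp' q' hq' hne'
    simp only [FA, Finset.mem_image] at hp' hq'
    obtain ⟨p, hp, rfl⟩ := hp'
    obtain ⟨q, hq, rfl⟩ := hq'
    have hpq : p ≠ q := by rintro rfl; exact hne' rfl
    have h4 := hM.2 p hp q hq hpq
    have hfp := hfree p hp
    have hfq := hfree q hq
    exact ⟨fun h => h4.1 (dA_inj m hfp.1 hfq.1 h),
           fun h => h4.2.1 (dA_inj m hfp.1 hfq.2 h),
           fun h => h4.2.2.1 (dA_inj m hfp.2 hfq.1 h),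
           fun h => h4.2.2.2 (dA_inj m hfp.2 hfq.2 h)⟩

lemma FA_symm {m : ℕ} {M : Finset (Fin (2*m+3) × Fin (2*m+3))}
    (hM : IsMatching (2*m+3) M) (hS : SymmMatching (2*m+3) M) :
    SymmMatching (2*m+2) (FA m M) := by
  have hfree : ∀ p ∈ M, p.1.val ≠ m+1 ∧ p.2.val ≠ m+1 :=
    center_free (by ring) hM hS
  intro p' hp'
  simp only [FA, Finset.mem_image] at hp' ⊢
  obtain ⟨p, hp, rfl⟩ := hp'
  have hf := hfree p hp
  refine ⟨(p.2.rev, p.1.rev), hS p hp, ?_⟩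
  simp only
  rw [← dA_rev m _ hf.1, ← dA_rev m _ hf.2]

lemma GA_isMatching {m : ℕ} {M : Finset (Fin (2*m+2) × Fin (2*m+2))}
    (hM : IsMatching (2*m+2) M) : IsMatching (2*m+3) (GA m M) := by
  constructor
  · intro p' hp'
    simp only [GA, Finset.mem_image] at hp'
    obtain ⟨p, hp, rfl⟩ := hp'
    have hgap := hM.1 p hp
    have := p.1.2
    have := p.2.2
    simp only [uA_val]
    split_ifs <;> omega
  · intro p' hp' q' hq' hne'
    simp only [GA, Finset.mem_image] at hp' hq'
    obtain ⟨p, hp, rfl⟩ := hp'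
    obtain ⟨q, hq, rfl⟩ := hq'
    have hpq : p ≠ q := by rintro rfl; exact hne' rfl
    have h4 := hM.2 p hp q hq hpq
    exact ⟨fun h => h4.1 (uA_inj m h), fun h => h4.2.1 (uA_inj m h),
           fun h => h4.2.2.1 (uA_inj m h), fun h => h4.2.2.2 (uA_inj m h)⟩

lemma GA_symm {m : ℕ} {M : Finset (Fin (2*m+2) × Fin (2*m+2))}
    (hS : SymmMatching (2*m+2) M) : SymmMatching (2*m+3) (GA m M) := by
  intro p' hp'
  simp only [GA, Finset.mem_image] at hp' ⊢
  obtain ⟨p, hp, rfl⟩ := hp'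
  refine ⟨(p.2.rev, p.1.rev), hS p hp, ?_⟩
  simp only
  rw [← uA_rev, ← uA_rev]

lemma GA_not_c {m : ℕ} {M : Finset (Fin (2*m+2) × Fin (2*m+2))}
    (hM : IsMatching (2*m+2) M) : cArc m ∉ GA m M := by
  intro h
  rw [mem_GA] at h
  have h2 := hM.1 _ h.2.2
  simp only [cArc, dA_val] at h2
  split_ifs at h2 <;> omega

lemma GA_FA {m : ℕ} {M : Finset (Fin (2*m+3) × Fin (2*m+3))}
    (hM : IsMatching (2*m+3) M) (hS : SymmMatching (2*m+3) M) :
    GA m (FA m M) = M := by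
  have hfree : ∀ p ∈ M, p.1.val ≠ m+1 ∧ p.2.val ≠ m+1 :=
    center_free (by ring) hM hS
  ext q
  rw [mem_GA]
  constructor
  · rintro ⟨h1, h2, h3⟩
    rw [mem_FA hfree] at h3
    rw [uA_dA m _ h1, uA_dA m _ h2] at h3
    simpa using h3
  · intro hq
    have h := hfree q hq
    refine ⟨h.1, h.2, ?_⟩
    rw [mem_FA hfree, uA_dA m _ h.1, uA_dA m _ h.2]
    simpa using hq

lemma FA_GA {m : ℕ} (M : Finset (Fin (2*m+2) × Fin (2*m+2))) :
    FA m (GA m M) = M := by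
  have hfree : ∀ p ∈ GA m M, p.1.val ≠ m+1 ∧ p.2.val ≠ m+1 := by
    intro p hp; rw [mem_GA] at hp; exact ⟨hp.1, hp.2.1⟩
  ext q
  rw [mem_FA hfree, mem_GA]
  constructor
  · rintro ⟨-, -, h⟩
    rw [dA_uA, dA_uA] at h
    simpa using h
  · intro hq
    exact ⟨uA_ne m _, uA_ne m _, by rw [dA_uA, dA_uA]; simpa using hq⟩

/-! ### B side: deleting the two endpoints of the short central arc -/

def dB (m : ℕ) (i : Fin (2*m+3)) : Fin (2*m+1) :=
  if h : i.val < m then ⟨i.val, by omega⟩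
  else if h2 : i.val = m + 1 then ⟨m, by omega⟩
  else ⟨i.val - 2, by have := i.2; omega⟩

def uB (m : ℕ) (i : Fin (2*m+1)) : Fin (2*m+3) :=
  if h : i.val < m then ⟨i.val, by omega⟩
  else if h2 : i.val = m then ⟨m+1, by omega⟩
  else ⟨i.val + 2, by have := i.2; omega⟩

lemma dB_val (m : ℕ) (i : Fin (2*m+3)) :
    (dB m i).val = if i.val < m then i.val else if i.val = m+1 then m else i.val - 2 := by
  unfold dB; split_ifs <;> rfl

lemma uB_val (m : ℕ) (i : Fin (2*m+1)) :
    (uB m i).val = if i.val < m then i.val else if i.val = m then m+1 else i.val + 2 := by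
  unfold uB; split_ifs <;> rfl

lemma uB_ne (m : ℕ) (i : Fin (2*m+1)) : (uB m i).val ≠ m ∧ (uB m i).val ≠ m + 2 := by
  have := i.2; rw [uB_val]; split_ifs <;> omega

lemma uB_ne' (m : ℕ) (i : Fin (2*m+1)) (h : i.val ≠ m) : (uB m i).val ≠ m + 1 := by
  have := i.2; rw [uB_val]; split_ifs <;> omega

lemma dB_uB (m : ℕ) (i : Fin (2*m+1)) : dB m (uB m i) = i := by
  have := i.2; apply Fin.ext; simp only [dB_val, uB_val]; split_ifs <;> omega

lemma uB_dB (m : ℕ) (i : Fin (2*m+3)) (h1 : i.val ≠ m) (h2 : i.val ≠ m+2) :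
    uB m (dB m i) = i := by
  have := i.2; apply Fin.ext; simp only [uB_val, dB_val]; split_ifs <;> omega

lemma uB_inj (m : ℕ) {i j : Fin (2*m+1)} (h : uB m i = uB m j) : i = j := by
  rw [← dB_uB m i, ← dB_uB m j, h]

lemma dB_inj (m : ℕ) {i j : Fin (2*m+3)}
    (hi1 : i.val ≠ m) (hi2 : i.val ≠ m+2) (hj1 : j.val ≠ m) (hj2 : j.val ≠ m+2)
    (h : dB m i = dB m j) : i = j := by
  rw [← uB_dB m i hi1 hi2, ← uB_dB m j hj1 hj2, h]

lemma uB_rev (m : ℕ) (i : Fin (2*m+1)) : (uB m i).rev = uB m i.rev := by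
  have := i.2
  apply Fin.ext
  simp only [Fin.val_rev, uB_val]
  split_ifs <;> omega

lemma dB_rev (m : ℕ) (i : Fin (2*m+3)) (h1 : i.val ≠ m) (h2 : i.val ≠ m+2) :
    (dB m i).rev = dB m i.rev := by
  have := i.2
  apply Fin.ext
  simp only [Fin.val_rev, dB_val]
  split_ifs <;> omega

lemma cArc_rev (m : ℕ) : ((cArc m).2.rev, (cArc m).1.rev) = cArc m := by
  simp only [cArc]
  refine Prod.ext (Fin.ext ?_) (Fin.ext ?_) <;> simp [Fin.val_rev] <;> omega

def FB (m : ℕ) (M : Finset (Fin (2*m+3) × Fin (2*m+3))) : Finset (Fin (2*m+1) × Fin (2*m+1)) :=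
  (M.erase (cArc m)).image (fun p => (dB m p.1, dB m p.2))

def GB (m : ℕ) (M : Finset (Fin (2*m+1) × Fin (2*m+1))) : Finset (Fin (2*m+3) × Fin (2*m+3)) :=
  insert (cArc m) (M.image (fun p => (uB m p.1, uB m p.2)))

/-- points of non-central arcs avoid the middle three positions -/
lemma good_of_mem {m : ℕ} {M : Finset (Fin (2*m+3) × Fin (2*m+3))}
    (hM : IsMatching (2*m+3) M) (hS : SymmMatching (2*m+3) M) (hc : cArc m ∈ M) :
    ∀ p ∈ M, p ≠ cArc m →
      (p.1.val ≠ m ∧ p.1.val ≠ m+1 ∧ p.1.val ≠ m+2) ∧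
      (p.2.val ≠ m ∧ p.2.val ≠ m+1 ∧ p.2.val ≠ m+2) := by
  intro p hp hne
  have hfree := center_free (show 2*m+3 = 2*(m+1)+1 by ring) hM hS p hp
  have h4 := hM.2 p hp (cArc m) hc hne
  exact ⟨⟨fun h => h4.1 (Fin.ext h), hfree.1, fun h => h4.2.1 (Fin.ext h)⟩,
         ⟨fun h => h4.2.2.1 (Fin.ext h), hfree.2, fun h => h4.2.2.2 (Fin.ext h)⟩⟩

lemma mem_FB {m : ℕ} {M : Finset (Fin (2*m+3) × Fin (2*m+3))}
    (hgood : ∀ p ∈ M, p ≠ cArc m →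
      (p.1.val ≠ m ∧ p.1.val ≠ m+2) ∧ (p.2.val ≠ m ∧ p.2.val ≠ m+2))
    (q : Fin (2*m+1) × Fin (2*m+1)) :
    q ∈ FB m M ↔ (uB m q.1, uB m q.2) ∈ M := by
  simp only [FB, Finset.mem_image, Finset.mem_erase]
  constructor
  · rintro ⟨p, ⟨hpne, hp⟩, rfl⟩
    have h := hgood p hp hpne
    rw [uB_dB m _ h.1.1 h.1.2, uB_dB m _ h.2.1 h.2.2]
    simpa using hp
  · intro h
    have hne : (uB m q.1, uB m q.2) ≠ cArc m := by
      intro he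
      have := congrArg Fin.val (congrArg Prod.fst he)
      exact (uB_ne m q.1).1 this
    exact ⟨_, ⟨hne, h⟩, by rw [dB_uB, dB_uB]⟩

lemma mem_GB {m : ℕ} {M : Finset (Fin (2*m+1) × Fin (2*m+1))}
    (q : Fin (2*m+3) × Fin (2*m+3)) :
    q ∈ GB m M ↔ q = cArc m ∨
      ((q.1.val ≠ m ∧ q.1.val ≠ m+2) ∧ (q.2.val ≠ m ∧ q.2.val ≠ m+2) ∧
        (dB m q.1, dB m q.2) ∈ M) := by
  simp only [GB, Finset.mem_insert, Finset.mem_image]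
  apply or_congr_right
  constructor
  · rintro ⟨p, hp, rfl⟩
    refine ⟨uB_ne m _, uB_ne m _, ?_⟩
    rw [dB_uB, dB_uB]; simpa using hp
  · rintro ⟨h1, h2, h3⟩
    exact ⟨_, h3, by rw [uB_dB m _ h1.1 h1.2, uB_dB m _ h2.1 h2.2]⟩

lemma FB_isMatching {m : ℕ} {M : Finset (Fin (2*m+3) × Fin (2*m+3))}
    (hM : IsMatching (2*m+3) M) (hS : SymmMatching (2*m+3) M) (hc : cArc m ∈ M) :
    IsMatching (2*m+1) (FB m M) := by
  have hgood := good_of_mem hM hS hc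
  constructor
  · intro p' hp'
    simp only [FB, Finset.mem_image, Finset.mem_erase] at hp'
    obtain ⟨p, ⟨hpne, hp⟩, rfl⟩ := hp'
    have hgap := hM.1 p hp
    have h := hgood p hp hpne
    obtain ⟨⟨a1, a2, a3⟩, b1, b2, b3⟩ := h
    simp only [dB_val]
    split_ifs <;> omega
  · intro p' hp' q' hq' hne'
    simp only [FB, Finset.mem_image, Finset.mem_erase] at hp' hq'
    obtain ⟨p, ⟨hpne, hp⟩, rfl⟩ := hp'
    obtain ⟨q, ⟨hqne, hq⟩, rfl⟩ := hq'
    have hpq : p ≠ q := by rintro rfl; exact hne' rfl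
    have h4 := hM.2 p hp q hq hpq
    have hgp := hgood p hp hpne
    have hgq := hgood q hq hqne
    exact ⟨fun h => h4.1 (dB_inj m hgp.1.1 hgp.1.2.2 hgq.1.1 hgq.1.2.2 h),
           fun h => h4.2.1 (dB_inj m hgp.1.1 hgp.1.2.2 hgq.2.1 hgq.2.2.2 h),
           fun h => h4.2.2.1 (dB_inj m hgp.2.1 hgp.2.2.2 hgq.1.1 hgq.1.2.2 h),
           fun h => h4.2.2.2 (dB_inj m hgp.2.1 hgp.2.2.2 hgq.2.1 hgq.2.2.2 h)⟩

lemma FB_symm {m : ℕ} {M : Finset (Fin (2*m+3) × Fin (2*m+3))}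
    (hM : IsMatching (2*m+3) M) (hS : SymmMatching (2*m+3) M) (hc : cArc m ∈ M) :
    SymmMatching (2*m+1) (FB m M) := by
  have hgood := good_of_mem hM hS hc
  intro p' hp'
  simp only [FB, Finset.mem_image, Finset.mem_erase] at hp' ⊢
  obtain ⟨p, ⟨hpne, hp⟩, rfl⟩ := hp'
  have h := hgood p hp hpne
  have hmem := hS p hp
  have hrne : (p.2.rev, p.1.rev) ≠ cArc m := by
    intro he
    apply hpne
    have h1 : p.2.rev = (cArc m).1 := congrArg Prod.fst he
    have h2 : p.1.rev = (cArc m).2 := congrArg Prod.snd he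
    have e1 : p.1 = (cArc m).1 := by
      have := congrArg Fin.rev h2
      rw [Fin.rev_rev] at this
      rw [this]
      apply Fin.ext
      simp only [cArc, Fin.val_rev]
      omega
    have e2 : p.2 = (cArc m).2 := by
      have := congrArg Fin.rev h1
      rw [Fin.rev_rev] at this
      rw [this]
      apply Fin.ext
      simp only [cArc, Fin.val_rev]
      omega
    exact Prod.ext e1 e2
  refine ⟨(p.2.rev, p.1.rev), ⟨hrne, hmem⟩, ?_⟩
  simp only
  rw [← dB_rev m _ h.1.1 h.1.2.2, ← dB_rev m _ h.2.1 h.2.2.2]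

lemma GB_isMatching {m : ℕ} {M : Finset (Fin (2*m+1) × Fin (2*m+1))}
    (hM : IsMatching (2*m+1) M) (hS : SymmMatching (2*m+1) M) :
    IsMatching (2*m+3) (GB m M) := by
  have hfree : ∀ p ∈ M, p.1.val ≠ m ∧ p.2.val ≠ m := center_free rfl hM hS
  constructor
  · intro p' hp'
    simp only [GB, Finset.mem_insert, Finset.mem_image] at hp'
    rcases hp' with rfl | ⟨p, hp, rfl⟩
    · simp [cArc]
    · have hgap := hM.1 p hp
      have := p.1.2
      have := p.2.2
      simp only [uB_val]
      split_ifs <;> omega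
  · intro p' hp' q' hq' hne'
    simp only [GB, Finset.mem_insert, Finset.mem_image] at hp' hq'
    have key : ∀ r : Fin (2*m+1) × Fin (2*m+1),
        (cArc m).1 ≠ uB m r.1 ∧ (cArc m).1 ≠ uB m r.2 ∧
        (cArc m).2 ≠ uB m r.1 ∧ (cArc m).2 ≠ uB m r.2 := by
      intro r
      refine ⟨fun h => (uB_ne m r.1).1 (congrArg Fin.val h).symm,
        fun h => (uB_ne m r.2).1 (congrArg Fin.val h).symm,
        fun h => (uB_ne m r.1).2 (congrArg Fin.val h).symm,
        fun h => (uB_ne m r.2).2 (congrArg Fin.val h).symm⟩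
    rcases hp' with rfl | ⟨p, hp, rfl⟩ <;> rcases hq' with rfl | ⟨q, hq, rfl⟩
    · exact absurd rfl hne'
    · exact ⟨(key q).1, (key q).2.1, (key q).2.2.1, (key q).2.2.2⟩
    · exact ⟨fun h => (key p).1 h.symm, fun h => (key p).2.2.1 h.symm,
             fun h => (key p).2.1 h.symm, fun h => (key p).2.2.2 h.symm⟩
    · have hpq : p ≠ q := by rintro rfl; exact hne' rfl
      have h4 := hM.2 p hp q hq hpq
      exact ⟨fun h => h4.1 (uB_inj m h), fun h => h4.2.1 (uB_inj m h),
             fun h => h4.2.2.1 (uB_inj m h), fun h => h4.2.2.2 (uB_inj m h)⟩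

lemma GB_symm {m : ℕ} {M : Finset (Fin (2*m+1) × Fin (2*m+1))}
    (hS : SymmMatching (2*m+1) M) : SymmMatching (2*m+3) (GB m M) := by
  intro p' hp'
  simp only [GB, Finset.mem_insert, Finset.mem_image] at hp' ⊢
  rcases hp' with rfl | ⟨p, hp, rfl⟩
  · left; exact cArc_rev m
  · right
    refine ⟨(p.2.rev, p.1.rev), hS p hp, ?_⟩
    simp only
    rw [← uB_rev, ← uB_rev]

lemma GB_mem_c {m : ℕ} (M : Finset (Fin (2*m+1) × Fin (2*m+1))) : cArc m ∈ GB m M :=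
  Finset.mem_insert_self _ _

lemma GB_FB {m : ℕ} {M : Finset (Fin (2*m+3) × Fin (2*m+3))}
    (hM : IsMatching (2*m+3) M) (hS : SymmMatching (2*m+3) M) (hc : cArc m ∈ M) :
    GB m (FB m M) = M := by
  have hgood := good_of_mem hM hS hc
  have hgood' : ∀ p ∈ M, p ≠ cArc m →
      (p.1.val ≠ m ∧ p.1.val ≠ m+2) ∧ (p.2.val ≠ m ∧ p.2.val ≠ m+2) :=
    fun p hp hne => ⟨⟨(hgood p hp hne).1.1, (hgood p hp hne).1.2.2⟩,
                     ⟨(hgood p hp hne).2.1, (hgood p hp hne).2.2.2⟩⟩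
  ext q
  rw [mem_GB]
  constructor
  · rintro (rfl | ⟨h1, h2, h3⟩)
    · exact hc
    · rw [mem_FB hgood'] at h3
      rw [uB_dB m _ h1.1 h1.2, uB_dB m _ h2.1 h2.2] at h3
      simpa using h3
  · intro hq
    by_cases hqc : q = cArc m
    · exact Or.inl hqc
    · right
      have h := hgood' q hq hqc
      refine ⟨h.1, h.2, ?_⟩
      rw [mem_FB hgood', uB_dB m _ h.1.1 h.1.2, uB_dB m _ h.2.1 h.2.2]
      simpa using hq

lemma FB_GB {m : ℕ} {M : Finset (Fin (2*m+1) × Fin (2*m+1))}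
    (hM : IsMatching (2*m+1) M) (hS : SymmMatching (2*m+1) M) :
    FB m (GB m M) = M := by
  have hgood : ∀ p ∈ GB m M, p ≠ cArc m →
      (p.1.val ≠ m ∧ p.1.val ≠ m+2) ∧ (p.2.val ≠ m ∧ p.2.val ≠ m+2) := by
    intro p hp hne
    rw [mem_GB] at hp
    rcases hp with rfl | ⟨h1, h2, -⟩
    · exact absurd rfl hne
    · exact ⟨h1, h2⟩
  ext q
  rw [mem_FB hgood, mem_GB]
  constructor
  · rintro (he | ⟨-, -, h⟩)
    · exact absurd (congrArg Fin.val (congrArg Prod.fst he)) (uB_ne m q.1).1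
    · rw [dB_uB, dB_uB] at h
      simpa using h
  · intro hq
    exact Or.inr ⟨uB_ne m _, uB_ne m _, by rw [dB_uB, dB_uB]; simpa using hq⟩

def eqA (m : ℕ) :
    {M : Finset (Fin (2*m+3) × Fin (2*m+3)) //
      (IsMatching (2*m+3) M ∧ SymmMatching (2*m+3) M) ∧ cArc m ∉ M} ≃
    {M : Finset (Fin (2*m+2) × Fin (2*m+2)) //
      IsMatching (2*m+2) M ∧ SymmMatching (2*m+2) M} where
  toFun x := ⟨FA m x.1, FA_isMatching x.2.1.1 x.2.1.2 x.2.2, FA_symm x.2.1.1 x.2.1.2⟩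
  invFun y := ⟨GA m y.1, ⟨GA_isMatching y.2.1, GA_symm y.2.2⟩, GA_not_c y.2.1⟩
  left_inv x := Subtype.ext (GA_FA x.2.1.1 x.2.1.2)
  right_inv y := Subtype.ext (FA_GA y.1)

def eqB (m : ℕ) :
    {M : Finset (Fin (2*m+3) × Fin (2*m+3)) //
      (IsMatching (2*m+3) M ∧ SymmMatching (2*m+3) M) ∧ cArc m ∈ M} ≃
    {M : Finset (Fin (2*m+1) × Fin (2*m+1)) //
      IsMatching (2*m+1) M ∧ SymmMatching (2*m+1) M} where
  toFun x := ⟨FB m x.1, FB_isMatching x.2.1.1 x.2.1.2 x.2.2, FB_symm x.2.1.1 x.2.1.2 x.2.2⟩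
  invFun y := ⟨GB m y.1, ⟨GB_isMatching y.2.1 y.2.2, GB_symm y.2.2⟩, GB_mem_c _⟩
  left_inv x := Subtype.ext (GB_FB x.2.1.1 x.2.1.2 x.2.2)
  right_inv y := Subtype.ext (FB_GB y.2.1 y.2.2)

theorem key (m : ℕ) : Q (2*m+3) = Q (2*m+2) + Q (2*m+1) := by
  classical
  have e0 :
      {M : Finset (Fin (2*m+3) × Fin (2*m+3)) //
        IsMatching (2*m+3) M ∧ SymmMatching (2*m+3) M} ≃
      {M : Finset (Fin (2*m+3) × Fin (2*m+3)) //
        (IsMatching (2*m+3) M ∧ SymmMatching (2*m+3) M) ∧ cArc m ∈ M} ⊕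
      {M : Finset (Fin (2*m+3) × Fin (2*m+3)) //
        (IsMatching (2*m+3) M ∧ SymmMatching (2*m+3) M) ∧ cArc m ∉ M} :=
    (Equiv.sumCompl (fun x : {M : Finset (Fin (2*m+3) × Fin (2*m+3)) //
        IsMatching (2*m+3) M ∧ SymmMatching (2*m+3) M} => cArc m ∈ x.1)).symm.trans
      (Equiv.sumCongr
        (Equiv.subtypeSubtypeEquivSubtypeInter
          (fun M => IsMatching (2*m+3) M ∧ SymmMatching (2*m+3) M)
          (fun M => cArc m ∈ M))
        (Equiv.subtypeSubtypeEquivSubtypeInter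
          (fun M => IsMatching (2*m+3) M ∧ SymmMatching (2*m+3) M)
          (fun M => cArc m ∉ M)))
  rw [Q, Nat.card_congr e0, Nat.card_sum,
    Nat.card_congr (eqB m), Nat.card_congr (eqA m)]
  rw [Q, Q]
  exact Nat.add_comm _ _

theorem statement7 : ∀ n : ℕ, 1 ≤ n → Q (2 * n + 1) = Q (2 * n) + Q (2 * n - 1) := by
  intro n hn
  obtain ⟨m, rfl⟩ : ∃ m, n = m + 1 := ⟨n - 1, by omega⟩
  have h1 : 2*(m+1)+1 = 2*m+3 := by ring
  have h2 : 2*(m+1) = 2*m+2 := by ring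
  have h3 : 2*m+2-1 = 2*m+1 := by omega
  rw [h1, h2, h3]
  exact key m
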